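/- Assume ϖ_k is minuscule and J = I \ {k}. If y, w ∈ W^J satisfy w ≥ y in the Bruhat order, then there exist a chain y = y_0, y_1, …, y_p = w in W^J and indices j_1, …, j_p ∈ I with y_q = s_{j_q} y_{q-1} and ℓ(y_q) = ℓ(y_{q-1}) + 1 for all q; that is, the Bruhat order on W^J coincides with the left weak order on W^J. -/

import Mathlib

/-- An axiomatized finite crystallographic root system datum, with weight/root
space `V` over `ℚ`, simple roots `α i`, an invariant inner product `B`,
Weyl group `W` acting faithfully on `V`, and the set of roots `isRoot`. -/
structure RootSystemData (I : Type) [Fintype I] [DecidableEq I] where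
  V : Type
  [instAddCommGroup : AddCommGroup V]
  [instModule : Module ℚ V]
  W : Type
  [instGroup : Group W]
  α : I → V
  B : V →ₗ[ℚ] V →ₗ[ℚ] ℚ
  toLin : W →* Module.End ℚ V
  s : I → W
  isRoot : V → Prop
  B_symm : ∀ x y, B x y = B y x
  B_pos : ∀ β, isRoot β → 0 < B β β
  B_inv : ∀ (w : W) (x y : V), B (toLin w x) (toLin w y) = B x y
  root_simple : ∀ i, isRoot (α i)
  root_inv : ∀ (w : W) (β : V), isRoot β → isRoot (toLin w β)
  root_gen : ∀ β, isRoot β → ∃ (w : W) (i : I), β = toLin w (α i)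
  root_finite : (setOf isRoot).Finite
  indep : LinearIndependent ℚ α
  s_act : ∀ i x, toLin (s i) x = x - (2 * B (α i) x / B (α i) (α i)) • α i
  gen : Subgroup.closure (Set.range s) = ⊤
  faithful : Function.Injective toLin
  root_int : ∀ β, isRoot β → ∃ c : I → ℤ, β = ∑ i, (c i : ℚ) • α i
  pos_or_neg : ∀ β, isRoot β →
    (∃ c : I → ℕ, β = ∑ i, (c i : ℚ) • α i) ∨ (∃ c : I → ℕ, -β = ∑ i, (c i : ℚ) • α i)

attribute [instance] RootSystemData.instAddCommGroup RootSystemData.instModule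
  RootSystemData.instGroup

namespace RootSystemData

variable {I : Type} [Fintype I] [DecidableEq I] (R : RootSystemData I)

/-- `β` is a positive root. -/
def IsPos (β : R.V) : Prop :=
  R.isRoot β ∧ ∃ c : I → ℕ, β = ∑ i, (c i : ℚ) • R.α i

/-- The finite set of positive roots. -/
noncomputable def posFinset : Finset R.V :=
  (Set.Finite.subset R.root_finite (fun _ hb => hb.1) : (setOf R.IsPos).Finite).toFinset

/-- Half the sum of the positive roots. -/
noncomputable def ρ : R.V := (2 : ℚ)⁻¹ • ∑ β ∈ R.posFinset, β

/-- The pairing `⟨x, β∨⟩` of `x` with the coroot of `β`. -/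
noncomputable def coroot (β x : R.V) : ℚ := 2 * R.B β x / R.B β β

open Classical in
/-- The reflection `s_β ∈ W` in a root `β`. -/
noncomputable def refl (β : R.V) : R.W :=
  if h : R.isRoot β then
    (R.root_gen β h).choose * R.s (R.root_gen β h).choose_spec.choose *
      (R.root_gen β h).choose⁻¹
  else 1

/-- The length function on the Weyl group. -/
noncomputable def len (w : R.W) : ℕ :=
  sInf {n | ∃ l : List I, l.length = n ∧ (l.map R.s).prod = w}

/-- Bruhat order: generated by multiplication by reflections which increases length. -/
def bruhatLE : R.W → R.W → Prop :=
  Relation.ReflTransGen (fun u v => (∃ β, R.IsPos β ∧ v = R.refl β * u) ∧ R.len u < R.len v)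

def bruhatLT (u v : R.W) : Prop := R.bruhatLE u v ∧ u ≠ v

/-- The parabolic subgroup `W_J`. -/
def WJ (J : Set I) : Subgroup R.W := Subgroup.closure (R.s '' J)

/-- `w` is a minimal-length representative of its coset `w W_J`. -/
def IsMinRep (J : Set I) (w : R.W) : Prop :=
  ∀ z ∈ R.WJ J, R.len w ≤ R.len (w * z)

/-- `β ∈ Δ⁺_J`: positive roots in the span of the simple roots indexed by `J`. -/
def posJ (J : Set I) (β : R.V) : Prop :=
  R.IsPos β ∧ β ∈ Submodule.span ℚ (R.α '' J)

/-- A Bruhat edge `x → x s_β` in the quantum Bruhat graph. -/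
def BruhatEdge (x : R.W) (β : R.V) : Prop :=
  R.IsPos β ∧ R.len (x * R.refl β) = R.len x + 1

/-- A quantum edge `x → x s_β` in the quantum Bruhat graph. -/
def QuantumEdge (x : R.W) (β : R.V) : Prop :=
  R.IsPos β ∧ (R.len (x * R.refl β) : ℚ) = R.len x + 1 - 2 * R.coroot β R.ρ

/-- An edge of the quantum Bruhat graph. -/
def QBGEdge (x : R.W) (β : R.V) : Prop := R.BruhatEdge x β ∨ R.QuantumEdge x β

/-- A quantum root: `ℓ(s_β) = 2⟨ρ, β∨⟩ - 1`. -/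
def IsQuantumRoot (β : R.V) : Prop :=
  R.IsPos β ∧ (R.len (R.refl β) : ℚ) = 2 * R.coroot β R.ρ - 1

/-- A long root (maximal squared length); in simply-laced type all roots are long. -/
def IsLong (β : R.V) : Prop :=
  R.isRoot β ∧ ∀ γ, R.isRoot γ → R.B γ γ ≤ R.B β β

/-- A short root. -/
def IsShort (β : R.V) : Prop := R.isRoot β ∧ ¬ R.IsLong β

def IsSimplyLaced : Prop :=
  ∀ β γ, R.isRoot β → R.isRoot γ → R.B β β = R.B γ γ

def IsIrreducible : Prop :=
  Nonempty I ∧ ∀ J : Set I,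
    (∀ i ∈ J, ∀ j ∉ J, R.B (R.α i) (R.α j) = 0) → J = ∅ ∨ J = Set.univ

/-- `θ` is the highest root. -/
def IsHighestRoot (θ : R.V) : Prop :=
  R.IsPos θ ∧ ∀ β, R.IsPos β → ∃ c : I → ℕ, θ - β = ∑ i, (c i : ℚ) • R.α i

/-- `ϖ` is the fundamental weight associated to `k`. -/
def IsFundamental (k : I) (ϖ : R.V) : Prop :=
  ∀ i, R.coroot (R.α i) ϖ = if i = k then 1 else 0

/-- `ϖ` is minuscule. -/
def IsMinuscule (ϖ : R.V) : Prop :=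
  ∀ β, R.isRoot β → R.coroot β ϖ ∈ ({-1, 0, 1} : Set ℚ)

/-- A strict total order on `Δ⁺` which is a reflection (convex) order. -/
def IsReflectionOrder (lt : R.V → R.V → Prop) : Prop :=
  (∀ β, ¬ lt β β) ∧ (∀ a b c, lt a b → lt b c → lt a c) ∧
  (∀ β γ, R.IsPos β → R.IsPos γ → β ≠ γ → lt β γ ∨ lt γ β) ∧
  (∀ β γ, R.IsPos β → R.IsPos γ → R.IsPos (β + γ) →
    (lt β (β + γ) ∧ lt (β + γ) γ) ∨ (lt γ (β + γ) ∧ lt (β + γ) β))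

end RootSystemData

open RootSystemData in
/-- A directed path in the quantum Bruhat graph with the given list of labels. -/
def QBGPath {I : Type} [Fintype I] [DecidableEq I] (R : RootSystemData I) :
    R.W → List R.V → R.W → Prop
  | x, [], y => x = y
  | x, β :: l, y => R.QBGEdge x β ∧ QBGPath R (x * R.refl β) l y

open RootSystemData in
/-- A directed path in the Bruhat graph (Bruhat edges only). -/
def BGPath {I : Type} [Fintype I] [DecidableEq I] (R : RootSystemData I) :
    R.W → List R.V → R.W → Prop
  | x, [], y => x = y
  | x, β :: l, y => R.BruhatEdge x β ∧ BGPath R (x * R.refl β) l y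

/-- The Cartan pairing `⟨α_j, α_i∨⟩` of type `B_n` (Bourbaki labelling, shifted
to be 0-based: the short simple root is the last one, index `n-1`). -/
def BCartan (n : ℕ) (i j : Fin n) : ℚ :=
  if i = j then 2
  else if (i : ℕ) = n - 1 ∧ (j : ℕ) + 1 = n - 1 then -2
  else if ((i : ℕ) + 1 = j ∨ (j : ℕ) + 1 = i) then -1
  else 0

/-- `R` is of type `B_n` (via the identification `e` of its index set with `Fin n`). -/
def IsTypeB {I : Type} [Fintype I] [DecidableEq I] (R : RootSystemData I)
    (n : ℕ) (e : I ≃ Fin n) : Prop :=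
  2 ≤ n ∧ ∀ i j, R.coroot (R.α i) (R.α j) = BCartan n (e i) (e j)

/-- The product `s_{a+1} s_{a+2} ⋯ s_{b+1}` (0-based: indices `a, a+1, …, b`). -/
noncomputable def sSeq {n : ℕ} (hn : 0 < n) (R : RootSystemData (Fin n)) (a b : ℕ) : R.W :=
  ((List.range (b + 1 - a)).map (fun t => R.s ⟨(a + t) % n, Nat.mod_lt _ hn⟩)).prod

/-- The sum `α_{a+1} + ⋯ + α_b` of simple roots (0-based half-open interval `[a, b)`). -/
def aSum {n : ℕ} (hn : 0 < n) (R : RootSystemData (Fin n)) (a b : ℕ) : R.V :=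
  ∑ t ∈ Finset.Ico a b, R.α ⟨t % n, Nat.mod_lt _ hn⟩

namespace RootSystemData

variable {I : Type} [Fintype I] [DecidableEq I] (R : RootSystemData I)

section Basic

lemma act_act (u v : R.W) (x : R.V) :
    R.toLin u (R.toLin v x) = R.toLin (u * v) x := by
  rw [map_mul]; rfl

lemma act_one (x : R.V) : R.toLin 1 x = x := by
  rw [map_one]; rfl

lemma act_inv_act (u : R.W) (x : R.V) : R.toLin u⁻¹ (R.toLin u x) = x := by
  rw [act_act, inv_mul_cancel, act_one]

lemma act_act_inv (u : R.W) (x : R.V) : R.toLin u (R.toLin u⁻¹ x) = x := by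
  rw [act_act, mul_inv_cancel, act_one]

lemma d_pos (i : I) : 0 < R.B (R.α i) (R.α i) := R.B_pos _ (R.root_simple i)

lemma root_ne_zero {β : R.V} (h : R.isRoot β) : β ≠ 0 := by
  intro h0
  have := R.B_pos β h
  rw [h0] at this; simp at this

lemma alpha_ne_zero (i : I) : R.α i ≠ 0 := R.root_ne_zero (R.root_simple i)

lemma coroot_self {β : R.V} (h : R.isRoot β) : R.coroot β β = 2 := by
  unfold coroot
  field_simp [(R.B_pos β h).ne']

lemma coroot_neg (β x : R.V) : R.coroot (-β) x = - R.coroot β x := by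
  unfold coroot
  simp [neg_div, neg_neg]

lemma coroot_act (u : R.W) (β x : R.V) :
    R.coroot (R.toLin u β) (R.toLin u x) = R.coroot β x := by
  unfold coroot
  rw [R.B_inv, R.B_inv]

lemma coroot_act' (u : R.W) (β x : R.V) :
    R.coroot β (R.toLin u x) = R.coroot (R.toLin u⁻¹ β) x := by
  conv_lhs => rw [← R.act_act_inv u β, coroot_act]

lemma s_apply (i : I) (x : R.V) :
    R.toLin (R.s i) x = x - R.coroot (R.α i) x • R.α i := by
  rw [R.s_act]; rfl

lemma s_apply_self (i : I) : R.toLin (R.s i) (R.α i) = - R.α i := by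
  rw [R.s_apply, R.coroot_self (R.root_simple i), two_smul]
  abel

lemma coroot_s_apply (i : I) (x : R.V) :
    R.coroot (R.α i) (x - R.coroot (R.α i) x • R.α i) = - R.coroot (R.α i) x := by
  have hd := (R.d_pos i).ne'
  unfold coroot
  rw [map_sub, map_smul, smul_eq_mul]
  field_simp
  ring

lemma s_sq (i : I) : R.s i * R.s i = 1 := by
  apply R.faithful
  rw [map_mul, map_one]
  ext x
  have h1 : (R.toLin (R.s i) * R.toLin (R.s i)) x
      = R.toLin (R.s i) (R.toLin (R.s i) x) := rfl
  rw [Module.End.one_apply, h1, R.s_apply, R.s_apply, R.coroot_s_apply, neg_smul]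
  abel

lemma s_inv (i : I) : (R.s i)⁻¹ = R.s i := by
  rw [inv_eq_iff_mul_eq_one, R.s_sq]

end Basic

end RootSystemData
namespace RootSystemData

variable {I : Type} [Fintype I] [DecidableEq I] (R : RootSystemData I)

section Roots

/-- nonnegative-integer combination of simple roots -/
def NN (δ : R.V) : Prop := ∃ c : I → ℕ, δ = ∑ i, (c i : ℚ) • R.α i

lemma NN_zero : R.NN 0 := ⟨0, by simp⟩

lemma NN_add {δ γ : R.V} (h1 : R.NN δ) (h2 : R.NN γ) : R.NN (δ + γ) := by
  obtain ⟨c, hc⟩ := h1; obtain ⟨d, hd⟩ := h2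
  exact ⟨c + d, by simp [hc, hd, ← Finset.sum_add_distrib, add_smul]⟩

lemma coeff_zero {f : I → ℚ} (h : ∑ i, f i • R.α i = 0) : ∀ i, f i = 0 :=
  Fintype.linearIndependent_iff.mp R.indep f h

lemma coeff_eq {f g : I → ℚ} (h : ∑ i, f i • R.α i = ∑ i, g i • R.α i) :
    ∀ i, f i = g i := by
  intro i
  have h0 : ∑ i, (f i - g i) • R.α i = 0 := by
    simp [sub_smul, Finset.sum_sub_distrib, h]
  have := R.coeff_zero h0 i
  linarith

lemma isPos_def {β : R.V} (h : R.isRoot β) (hn : R.NN β) : R.IsPos β := ⟨h, hn⟩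

lemma not_pos_neg {β : R.V} (h1 : R.IsPos β) (h2 : R.IsPos (-β)) : False := by
  obtain ⟨hr, c, hc⟩ := h1
  obtain ⟨_, d, hd⟩ := h2
  have h0 : ∑ i, ((c i : ℚ) + (d i : ℚ)) • R.α i = 0 := by
    simp [add_smul, Finset.sum_add_distrib, ← hc, ← hd]
  have hci : ∀ i, (c i : ℚ) = 0 := by
    intro i
    have := R.coeff_zero h0 i
    have hcn : (0:ℚ) ≤ (c i : ℚ) := Nat.cast_nonneg _
    have hdn : (0:ℚ) ≤ (d i : ℚ) := Nat.cast_nonneg _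
    linarith
  apply R.root_ne_zero hr
  rw [hc]
  apply Finset.sum_eq_zero
  intro i _
  rw [hci i, zero_smul]

lemma root_neg {β : R.V} (h : R.isRoot β) : R.isRoot (-β) := by
  have hβ : R.isRoot β := h
  obtain ⟨u, i, hu⟩ := R.root_gen β h
  have : R.toLin (u * R.s i * u⁻¹) β = -β := by
    rw [← act_act, ← act_act, hu, act_inv_act, s_apply_self, map_neg, ← hu]
  rw [← this]
  exact R.root_inv _ _ h

lemma pos_dichotomy {β : R.V} (h : R.isRoot β) (hn : ¬ R.IsPos β) : R.IsPos (-β) := by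
  rcases R.pos_or_neg β h with h1 | h2
  · exact absurd ⟨h, h1⟩ hn
  · exact ⟨R.root_neg h, h2⟩

/-- a root with some positive rational coefficient is positive -/
lemma pos_of_coeff {γ : R.V} (h : R.isRoot γ) {q : I → ℚ} (hq : γ = ∑ i, q i • R.α i)
    {j : I} (hj : 0 < q j) : R.IsPos γ := by
  by_contra hn
  obtain ⟨_, d, hd⟩ := R.pos_dichotomy h hn
  have h0 : ∑ i, (q i + (d i : ℚ)) • R.α i = 0 := by
    simp [add_smul, Finset.sum_add_distrib, ← hq, ← hd]
  have := R.coeff_zero h0 j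
  have : (0:ℚ) ≤ (d j : ℚ) := Nat.cast_nonneg _
  linarith [R.coeff_zero h0 j]

end Roots

section Refl

lemma refl_spec {β : R.V} (h : R.isRoot β) :
    ∃ (u : R.W) (i : I), β = R.toLin u (R.α i) ∧ R.refl β = u * R.s i * u⁻¹ := by
  refine ⟨(R.root_gen β h).choose, (R.root_gen β h).choose_spec.choose,
    (R.root_gen β h).choose_spec.choose_spec, ?_⟩
  unfold refl
  rw [dif_pos h]

lemma refl_conj_apply (u : R.W) (i : I) (x : R.V) :
    R.toLin (u * R.s i * u⁻¹) x = x - R.coroot (R.toLin u (R.α i)) x • R.toLin u (R.α i) := by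
  rw [← act_act, ← act_act, s_apply, map_sub, map_smul, act_act_inv]
  congr 1
  · rw [coroot_act']
    congr 2
    rw [inv_inv]

lemma refl_apply {β : R.V} (h : R.isRoot β) (x : R.V) :
    R.toLin (R.refl β) x = x - R.coroot β x • β := by
  obtain ⟨u, i, h1, h2⟩ := R.refl_spec h
  rw [h2, refl_conj_apply, ← h1]

lemma refl_eq_conj {β : R.V} (h : R.isRoot β) (u : R.W) (i : I)
    (hβ : β = R.toLin u (R.α i)) : R.refl β = u * R.s i * u⁻¹ := by
  apply R.faithful
  ext x
  rw [refl_conj_apply, ← hβ, refl_apply R h]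

lemma refl_simple (i : I) : R.refl (R.α i) = R.s i := by
  have : R.refl (R.α i) = 1 * R.s i * 1⁻¹ :=
    R.refl_eq_conj (R.root_simple i) 1 i (by rw [act_one])
  simpa using this

lemma refl_conj {β : R.V} (h : R.isRoot β) (u : R.W) :
    R.refl (R.toLin u β) = u * R.refl β * u⁻¹ := by
  obtain ⟨v, i, h1, h2⟩ := R.refl_spec h
  have : R.toLin u β = R.toLin (u * v) (R.α i) := by rw [← act_act, ← h1]
  rw [R.refl_eq_conj (R.root_inv u β h) (u * v) i this, h2]
  group

lemma refl_apply_self {β : R.V} (h : R.isRoot β) :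
    R.toLin (R.refl β) β = -β := by
  rw [refl_apply R h, coroot_self R h, two_smul]
  abel

end Refl

end RootSystemData
namespace RootSystemData

variable {I : Type} [Fintype I] [DecidableEq I] (R : RootSystemData I)

section Words

lemma exists_index_list {l : List R.W} {S : Set I} (h : ∀ x ∈ l, x ∈ R.s '' S) :
    ∃ li : List I, (∀ j ∈ li, j ∈ S) ∧ li.map R.s = l := by
  induction l with
  | nil => exact ⟨[], by simp⟩
  | cons a l ih =>
    obtain ⟨li, h1, h2⟩ := ih (fun x hx => h x (List.mem_cons_of_mem a hx))
    obtain ⟨j, hj, hja⟩ := h a List.mem_cons_self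
    exact ⟨j :: li, by
      constructor
      · intro j' hj'
        rcases List.mem_cons.mp hj' with h' | h'
        · rwa [h']
        · exact h1 j' h'
      · simp [hja, h2]⟩

lemma mem_closure_word {S : Set I} {w : R.W} (h : w ∈ Subgroup.closure (R.s '' S)) :
    ∃ l : List I, (∀ j ∈ l, j ∈ S) ∧ (l.map R.s).prod = w := by
  have h' : w ∈ Submonoid.closure (R.s '' S ∪ (R.s '' S)⁻¹) := by
    rw [← Subgroup.closure_toSubmonoid]; exact h
  obtain ⟨l, hl, hprod⟩ := Submonoid.exists_list_of_mem_closure h'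
  have hl' : ∀ x ∈ l, x ∈ R.s '' S := by
    intro x hx
    rcases hl x hx with h' | h'
    · exact h'
    · obtain ⟨j, hj, hjx⟩ := h'
      refine ⟨j, hj, ?_⟩
      have : x⁻¹ = R.s j := hjx.symm
      rw [← R.s_inv j, ← this, inv_inv]
  obtain ⟨li, h1, h2⟩ := R.exists_index_list hl'
  exact ⟨li, h1, by rw [h2, hprod]⟩

lemma exists_word (w : R.W) : ∃ l : List I, (l.map R.s).prod = w := by
  have hw : w ∈ Subgroup.closure (R.s '' (Set.univ : Set I)) := by
    rw [Set.image_univ, R.gen]; trivial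
  obtain ⟨l, _, hl⟩ := R.mem_closure_word hw
  exact ⟨l, hl⟩

lemma len_le_word {w : R.W} {l : List I} (h : (l.map R.s).prod = w) :
    R.len w ≤ l.length :=
  Nat.sInf_le ⟨l, rfl, h⟩

lemma len_spec (w : R.W) : ∃ l : List I, l.length = R.len w ∧ (l.map R.s).prod = w := by
  have hne : {n | ∃ l : List I, l.length = n ∧ (l.map R.s).prod = w}.Nonempty := by
    obtain ⟨l, hl⟩ := R.exists_word w
    exact ⟨l.length, l, rfl, hl⟩
  exact Nat.sInf_mem hne

lemma len_one : R.len 1 = 0 :=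
  Nat.le_zero.mp (R.len_le_word (l := []) (by simp))

lemma eq_one_of_len_zero {w : R.W} (h : R.len w = 0) : w = 1 := by
  obtain ⟨l, hl, hp⟩ := R.len_spec w
  rw [h, List.length_eq_zero_iff] at hl
  rw [hl] at hp
  simpa using hp.symm

lemma word_prod_inv (l : List I) :
    ((l.map R.s).prod)⁻¹ = (l.reverse.map R.s).prod := by
  induction l with
  | nil => simp
  | cons a l ih => simp [mul_inv_rev, ih, R.s_inv]

lemma len_inv (w : R.W) : R.len w⁻¹ = R.len w := by
  have key : ∀ u : R.W, R.len u⁻¹ ≤ R.len u := by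
    intro u
    obtain ⟨l, hl, hp⟩ := R.len_spec u
    have : ((l.reverse.map R.s).prod) = u⁻¹ := by rw [← word_prod_inv, hp]
    calc R.len u⁻¹ ≤ l.reverse.length := R.len_le_word this
      _ = R.len u := by rw [List.length_reverse, hl]
  have h2 := key w⁻¹
  rw [inv_inv] at h2
  exact le_antisymm (key w) h2

lemma len_s_mul_le (i : I) (w : R.W) : R.len (R.s i * w) ≤ R.len w + 1 := by
  obtain ⟨l, hl, hp⟩ := R.len_spec w
  have : ((i :: l).map R.s).prod = R.s i * w := by simp [hp]
  calc R.len (R.s i * w) ≤ (i :: l).length := R.len_le_word this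
    _ = R.len w + 1 := by simp [hl]

lemma len_le_s_mul (i : I) (w : R.W) : R.len w ≤ R.len (R.s i * w) + 1 := by
  have h := R.len_s_mul_le i (R.s i * w)
  rwa [← mul_assoc, R.s_sq, one_mul] at h

end Words

end RootSystemData
namespace RootSystemData

variable {I : Type} [Fintype I] [DecidableEq I] (R : RootSystemData I)

section Ratio

lemma ratio_of_typeB {n : ℕ} (e : I ≃ Fin n) (hB : IsTypeB R n e) (i j : I) :
    R.B (R.α j) (R.α j) = R.B (R.α i) (R.α i) ∨
    R.B (R.α j) (R.α j) = 2 * R.B (R.α i) (R.α i) ∨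
    R.B (R.α i) (R.α i) = 2 * R.B (R.α j) (R.α j) := by
  obtain ⟨hn, hcart⟩ := hB
  set D : Fin n → ℚ := fun t => R.B (R.α (e.symm t)) (R.α (e.symm t)) with hD
  have hDpos : ∀ t, 0 < D t := fun t => R.d_pos _
  have rel : ∀ a b : Fin n, BCartan n a b * D a = BCartan n b a * D b := by
    intro a b
    have h1 : R.coroot (R.α (e.symm a)) (R.α (e.symm b)) = BCartan n a b := by
      rw [hcart]; simp
    have h2 : R.coroot (R.α (e.symm b)) (R.α (e.symm a)) = BCartan n b a := by
      rw [hcart]; simp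
    have e1 : 2 * R.B (R.α (e.symm a)) (R.α (e.symm b)) = BCartan n a b * D a := by
      rw [← h1]; unfold coroot; field_simp [(hDpos a).ne']; exact (mul_div_cancel_right₀ _ (hDpos a).ne').symm
    have e2 : 2 * R.B (R.α (e.symm b)) (R.α (e.symm a)) = BCartan n b a * D b := by
      rw [← h2]; unfold coroot; field_simp [(hDpos b).ne']; exact (mul_div_cancel_right₀ _ (hDpos b).ne').symm
    rw [← e1, ← e2, R.B_symm]
  have h0n : 0 < n := by omega
  have chain : ∀ m, (hm : m < n - 1) → D ⟨m, by omega⟩ = D ⟨0, h0n⟩ := by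
    intro m
    induction m with
    | zero => intro _; rfl
    | succ m ih =>
      intro hm
      have hmn : m < n - 1 := by omega
      have key := rel ⟨m, by omega⟩ ⟨m + 1, by omega⟩
      have hA1 : BCartan n ⟨m, by omega⟩ ⟨m + 1, by omega⟩ = -1 := by
        unfold BCartan
        rw [if_neg (by first | (simp; omega) | simp | omega), if_neg (by first | (simp; omega) | simp | omega), if_pos (by simp)]
      have hA2 : BCartan n ⟨m + 1, by omega⟩ ⟨m, by omega⟩ = -1 := by
        unfold BCartan
        rw [if_neg (by first | (simp; omega) | simp | omega), if_neg (by first | (simp; omega) | simp | omega), if_pos (by simp)]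
      rw [hA1, hA2] at key
      have : D ⟨m + 1, by omega⟩ = D ⟨m, by omega⟩ := by linarith
      rw [this, ih hmn]
  have lastrel : D ⟨n - 2, by omega⟩ = 2 * D ⟨n - 1, by omega⟩ := by
    have key := rel ⟨n - 2, by omega⟩ ⟨n - 1, by omega⟩
    have hA1 : BCartan n ⟨n - 2, by omega⟩ ⟨n - 1, by omega⟩ = -1 := by
      unfold BCartan
      rw [if_neg (by first | (simp; omega) | simp | omega), if_neg (by first | (simp; omega) | simp | omega), if_pos (by first | (simp; omega) | simp | omega)]
    have hA2 : BCartan n ⟨n - 1, by omega⟩ ⟨n - 2, by omega⟩ = -2 := by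
      unfold BCartan
      rw [if_neg (by first | (simp; omega) | simp | omega), if_pos (by first | (simp; omega) | simp | omega)]
    rw [hA1, hA2] at key
    linarith
  have cases_ : ∀ a : Fin n, D a = D ⟨0, h0n⟩ ∨ 2 * D a = D ⟨0, h0n⟩ := by
    intro a
    rcases Nat.lt_or_ge a.val (n - 1) with h | h
    · left
      have : a = ⟨a.val, a.isLt⟩ := rfl
      rw [this]
      exact chain a.val h
    · right
      have hav : a = ⟨n - 1, by omega⟩ := by
        apply Fin.ext; simp; omega
      rw [hav, ← lastrel]
      exact chain (n - 2) (by omega)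
  have hdi : R.B (R.α i) (R.α i) = D (e i) := by simp [hD]
  have hdj : R.B (R.α j) (R.α j) = D (e j) := by simp [hD]
  rcases cases_ (e i) with h1 | h1 <;> rcases cases_ (e j) with h2 | h2 <;>
    rw [hdi, hdj] <;> [left; skip; skip; left] <;> try linarith
  · right; right; linarith
  · right; left; linarith

lemma ratio (htype : R.IsSimplyLaced ∨ ∃ (n : ℕ) (e : I ≃ Fin n), IsTypeB R n e)
    (i j : I) :
    R.B (R.α j) (R.α j) = R.B (R.α i) (R.α i) ∨
    R.B (R.α j) (R.α j) = 2 * R.B (R.α i) (R.α i) ∨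
    R.B (R.α i) (R.α i) = 2 * R.B (R.α j) (R.α j) := by
  rcases htype with h | ⟨n, e, hB⟩
  · exact Or.inl (h _ _ (R.root_simple j) (R.root_simple i))
  · exact R.ratio_of_typeB e hB i j

/-- a root which is a natural multiple of a simple root equals that simple root -/
lemma root_mul_simple (htype : R.IsSimplyLaced ∨ ∃ (n : ℕ) (e : I ≃ Fin n), IsTypeB R n e)
    {β : R.V} (h : R.isRoot β) {i : I} {c : ℕ} (hc : β = (c : ℚ) • R.α i) : β = R.α i := by
  have hc0 : c ≠ 0 := by
    intro h0
    apply R.root_ne_zero h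
    rw [hc, h0]; simp
  rcases Nat.lt_or_ge c 2 with h2 | h2
  · have : c = 1 := by omega
    rw [hc, this]; simp
  · exfalso
    obtain ⟨u, j, hu⟩ := R.root_gen β h
    have hBβ : R.B β β = (c : ℚ) * (c : ℚ) * R.B (R.α i) (R.α i) := by
      rw [hc]; simp [mul_assoc]; try ring
    have hBβ' : R.B β β = R.B (R.α j) (R.α j) := by rw [hu, R.B_inv]
    have hdi := R.d_pos i
    have hdj := R.d_pos j
    have hc2 : (2 : ℚ) ≤ (c : ℚ) := by exact_mod_cast h2
    have hcc : (4 : ℚ) ≤ (c : ℚ) * (c : ℚ) := by nlinarith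
    rcases R.ratio htype i j with hr | hr | hr <;> nlinarith

/-- key lemma: `s i` maps positive roots other than `α i` to positive roots -/
lemma pos_s_apply (htype : R.IsSimplyLaced ∨ ∃ (n : ℕ) (e : I ≃ Fin n), IsTypeB R n e)
    {i : I} {β : R.V} (hβ : R.IsPos β) (hne : β ≠ R.α i) :
    R.IsPos (R.toLin (R.s i) β) := by
  obtain ⟨hr, c, hc⟩ := hβ
  have hroot : R.isRoot (R.toLin (R.s i) β) := R.root_inv _ _ hr
  by_cases hj : ∃ j, j ≠ i ∧ c j ≠ 0
  · obtain ⟨j, hji, hcj⟩ := hj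
    set a := R.coroot (R.α i) β with ha
    have hrep : R.toLin (R.s i) β = ∑ t, ((c t : ℚ) - (if t = i then a else 0)) • R.α t := by
      rw [R.s_apply, ← ha]
      have : ∑ t, ((c t : ℚ) - (if t = i then a else 0)) • R.α t
          = (∑ t, (c t : ℚ) • R.α t) - (∑ t, (if t = i then a else 0) • R.α t) := by
        rw [← Finset.sum_sub_distrib]
        congr 1; ext t; rw [sub_smul]
      rw [this, ← hc]
      congr 1
      simp only [ite_smul, zero_smul]
      rw [Finset.sum_ite_eq' Finset.univ i (fun t => a • R.α t)]
      simp
    apply R.pos_of_coeff hroot hrep (j := j)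
    rw [if_neg hji, sub_zero]
    have : (0:ℚ) ≤ (c j : ℚ) := Nat.cast_nonneg _
    have : (c j : ℚ) ≠ 0 := Nat.cast_ne_zero.mpr hcj
    positivity
  · push_neg at hj
    exfalso
    apply hne
    apply R.root_mul_simple htype hr (c := c i)
    rw [hc, Finset.sum_eq_single i]
    · intro b _ hb
      rw [hj b hb]; simp
    · intro hb
      exact absurd (Finset.mem_univ i) hb

end Ratio

end RootSystemData
namespace RootSystemData

variable {I : Type} [Fintype I] [DecidableEq I] (R : RootSystemData I)

section Exchange

lemma pos_simple (i : I) : R.IsPos (R.α i) := by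
  refine ⟨R.root_simple i, fun j => if j = i then 1 else 0, ?_⟩
  simp only [apply_ite (fun (m : ℕ) => (m : ℚ)), Nat.cast_one, Nat.cast_zero, ite_smul,
    zero_smul, one_smul, Finset.sum_ite_eq', Finset.mem_univ, if_true]

lemma exchange (htype : R.IsSimplyLaced ∨ ∃ (n : ℕ) (e : I ≃ Fin n), IsTypeB R n e) : ∀ (l : List I) {β : R.V}, R.IsPos β →
    R.IsPos (-(R.toLin ((l.map R.s).prod)⁻¹ β)) →
    ∃ l' : List I, (l'.map R.s).prod = R.refl β * (l.map R.s).prod ∧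
      l'.length + 1 = l.length := by
  intro l
  induction l with
  | nil =>
    intro β hβ hneg
    exfalso
    apply R.not_pos_neg hβ
    simpa [act_one] using hneg
  | cons i l ih =>
    intro β hβ hneg
    by_cases hpos : β = R.α i
    · refine ⟨l, ?_, by simp⟩
      subst hpos
      rw [R.refl_simple]
      simp [← mul_assoc, R.s_sq]
    · set u := (l.map R.s).prod with hu
      set β' := R.toLin (R.s i) β with hβ'def
      have hβ' : R.IsPos β' := R.pos_s_apply htype hβ hpos
      have hstep : R.toLin (((i :: l).map R.s).prod)⁻¹ β = R.toLin u⁻¹ β' := by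
        simp only [List.map_cons, List.prod_cons, mul_inv_rev, ← act_act, ← hu, hβ'def]
        rw [R.s_inv]
      rw [hstep] at hneg
      obtain ⟨l'', hp, hlen⟩ := ih hβ' hneg
      have hββ' : β = R.toLin (R.s i) β' := by
        rw [hβ'def, act_act, R.s_sq, act_one]
      have hrefl : R.refl β = R.s i * R.refl β' * R.s i := by
        rw [hββ', R.refl_conj hβ'.1, R.s_inv]
      refine ⟨i :: l'', ?_, by simp [← hlen]⟩
      simp only [List.map_cons, List.prod_cons, hp, hrefl, ← hu]
      rw [mul_assoc (R.s i * R.refl β') (R.s i) (R.s i * u), ← mul_assoc (R.s i) (R.s i) u, R.s_sq, one_mul, mul_assoc]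

lemma len_refl_mul_lt (htype : R.IsSimplyLaced ∨ ∃ (n : ℕ) (e : I ≃ Fin n), IsTypeB R n e) {β : R.V} {w : R.W} (hβ : R.IsPos β)
    (hneg : R.IsPos (-(R.toLin w⁻¹ β))) : R.len (R.refl β * w) < R.len w := by
  obtain ⟨l, hl, hp⟩ := R.len_spec w
  rw [← hp] at hneg
  obtain ⟨l', hp', hlen'⟩ := R.exchange htype l hβ hneg
  rw [hp] at hp'
  have := R.len_le_word hp'
  omega

lemma pos_inv_of_len_lt (htype : R.IsSimplyLaced ∨ ∃ (n : ℕ) (e : I ≃ Fin n), IsTypeB R n e) {β : R.V} {u : R.W} (hβ : R.IsPos β)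
    (h : R.len u < R.len (R.refl β * u)) : R.IsPos (R.toLin u⁻¹ β) := by
  by_contra hn
  have hroot : R.isRoot (R.toLin u⁻¹ β) := R.root_inv _ _ hβ.1
  have := R.len_refl_mul_lt htype hβ (R.pos_dichotomy hroot hn)
  omega

lemma act_inv_s_alpha (w : R.W) (i : I) :
    R.toLin (R.s i * w)⁻¹ (R.α i) = -(R.toLin w⁻¹ (R.α i)) := by
  rw [mul_inv_rev, ← act_act, R.s_inv, s_apply_self, map_neg]

lemma len_s_mul_of_pos (htype : R.IsSimplyLaced ∨ ∃ (n : ℕ) (e : I ≃ Fin n), IsTypeB R n e) {i : I} {w : R.W} (h : R.IsPos (R.toLin w⁻¹ (R.α i))) :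
    R.len (R.s i * w) = R.len w + 1 := by
  have hup := R.len_s_mul_le i w
  have hneg : R.IsPos (-(R.toLin (R.s i * w)⁻¹ (R.α i))) := by
    rw [act_inv_s_alpha, neg_neg]; exact h
  have hlt := R.len_refl_mul_lt htype (R.pos_simple i) hneg
  rw [R.refl_simple, ← mul_assoc, R.s_sq, one_mul] at hlt
  omega

lemma len_s_mul_of_neg (htype : R.IsSimplyLaced ∨ ∃ (n : ℕ) (e : I ≃ Fin n), IsTypeB R n e) {i : I} {w : R.W} (h : R.IsPos (-(R.toLin w⁻¹ (R.α i)))) :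
    R.len (R.s i * w) + 1 = R.len w := by
  have h' : R.IsPos (R.toLin (R.s i * w)⁻¹ (R.α i)) := by
    rw [act_inv_s_alpha]
    exact h
  have h2 := R.len_s_mul_of_pos htype h'
  rw [← mul_assoc, R.s_sq, one_mul] at h2
  omega

lemma exists_neg_simple (htype : R.IsSimplyLaced ∨ ∃ (n : ℕ) (e : I ≃ Fin n), IsTypeB R n e) {w : R.W} (h : w ≠ 1) :
    ∃ i, R.IsPos (-(R.toLin w (R.α i))) := by
  obtain ⟨l, hl, hp⟩ := R.len_spec w
  have hlne : l ≠ [] := by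
    intro h0
    apply h
    rw [← hp, h0]; simp
  set i := l.getLast hlne with hi
  set l₀ := l.dropLast with hl₀
  have hsplit : l₀ ++ [i] = l := List.dropLast_append_getLast hlne
  set u := (l₀.map R.s).prod with hu
  have hw : w = u * R.s i := by
    rw [← hp, ← hsplit]
    simp [hu]
  by_cases hpos : R.IsPos (R.toLin u (R.α i))
  · refine ⟨i, ?_⟩
    have : R.toLin w (R.α i) = -(R.toLin u (R.α i)) := by
      rw [hw, ← act_act, s_apply_self, map_neg]
    rw [this, neg_neg]
    exact hpos
  · exfalso
    have hneg : R.IsPos (-(R.toLin u (R.α i))) :=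
      R.pos_dichotomy (R.root_inv _ _ (R.root_simple i)) hpos
    have hrev : ((l₀.reverse.map R.s).prod) = u⁻¹ := by
      rw [hu, word_prod_inv]
    have hyp : R.IsPos (-(R.toLin ((l₀.reverse.map R.s).prod)⁻¹ (R.α i))) := by
      rw [hrev, inv_inv]
      exact hneg
    obtain ⟨l', hp', hlen'⟩ := R.exchange htype l₀.reverse (R.pos_simple i) hyp
    rw [hrev, R.refl_simple] at hp'
    have hwinv : R.s i * u⁻¹ = w⁻¹ := by rw [hw]; simp [R.s_inv]
    rw [hwinv] at hp'
    have h1 := R.len_le_word hp'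
    rw [R.len_inv] at h1
    have h2 : l₀.reverse.length = l.length - 1 := by
      rw [List.length_reverse, hl₀, List.length_dropLast]
    have h3 : 1 ≤ l.length := by
      cases l with
      | nil => exact absurd rfl hlne
      | cons a l => simp
    omega

lemma eq_one_of_fix (htype : R.IsSimplyLaced ∨ ∃ (n : ℕ) (e : I ≃ Fin n), IsTypeB R n e) {w : R.W} (h : ∀ i, R.toLin w (R.α i) = R.α i) : w = 1 := by
  by_contra hne
  obtain ⟨i, hi⟩ := R.exists_neg_simple htype hne
  rw [h i] at hi
  exact R.not_pos_neg (R.pos_simple i) hi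

lemma W_finite (htype : R.IsSimplyLaced ∨ ∃ (n : ℕ) (e : I ≃ Fin n), IsTypeB R n e) : Finite R.W := by
  have hS : Finite (setOf R.isRoot) := R.root_finite.to_subtype
  let f : R.W → (setOf R.isRoot → setOf R.isRoot) := fun w x =>
    ⟨R.toLin w x.1, R.root_inv w x.1 x.2⟩
  have hf : Function.Injective f := by
    intro w w' hww
    have key : ∀ i, R.toLin (w'⁻¹ * w) (R.α i) = R.α i := by
      intro i
      have h1 : f w ⟨R.α i, R.root_simple i⟩ = f w' ⟨R.α i, R.root_simple i⟩ := by
        rw [hww]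
      have h2 : R.toLin w (R.α i) = R.toLin w' (R.α i) := congrArg Subtype.val h1
      rw [← act_act, h2, act_act, inv_mul_cancel, act_one]
    have h1 := R.eq_one_of_fix htype key
    exact (inv_mul_eq_one.mp h1).symm
  exact Finite.of_injective f hf

end Exchange

end RootSystemData
namespace RootSystemData

variable {I : Type} [Fintype I] [DecidableEq I] (R : RootSystemData I)

section MinRep

lemma B_sum_apply (c : I → ℚ) (x : R.V) :
    R.B (∑ i, c i • R.α i) x = ∑ i, c i * R.B (R.α i) x := by
  rw [map_sum, LinearMap.sum_apply]
  congr 1; ext i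
  rw [map_smul]; rfl

lemma B_alpha_fund {k : I} {ϖ : R.V} (hfund : R.IsFundamental k ϖ) (i : I) :
    R.B (R.α i) ϖ = if i = k then R.B (R.α i) (R.α i) / 2 else 0 := by
  have h := hfund i
  unfold coroot at h
  have hd := (R.d_pos i).ne'
  rcases eq_or_ne i k with hik | hik
  · rw [if_pos hik] at h ⊢
    field_simp at h ⊢
    linarith
  · rw [if_neg hik] at h ⊢
    field_simp at h
    linarith

lemma dominant_pos {k : I} {ϖ : R.V} (hfund : R.IsFundamental k ϖ) {γ : R.V}
    (h : R.IsPos γ) : 0 ≤ R.coroot γ ϖ := by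
  obtain ⟨hr, c, hc⟩ := h
  have hB : R.B γ ϖ = ∑ i, (c i : ℚ) * R.B (R.α i) ϖ := by
    rw [hc, B_sum_apply]
  have hBn : 0 ≤ R.B γ ϖ := by
    rw [hB]
    apply Finset.sum_nonneg
    intro i _
    rw [R.B_alpha_fund hfund]
    have := (R.d_pos i).le
    have : (0:ℚ) ≤ (c i : ℚ) := Nat.cast_nonneg _
    split <;> positivity
  unfold coroot
  have := R.B_pos γ hr
  positivity

lemma dominant_neg {k : I} {ϖ : R.V} (hfund : R.IsFundamental k ϖ) {γ : R.V}
    (h : R.IsPos (-γ)) : R.coroot γ ϖ ≤ 0 := by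
  have := R.dominant_pos hfund h
  rw [coroot_neg] at this
  linarith

lemma stab_mem_WJ (htype : R.IsSimplyLaced ∨ ∃ (n : ℕ) (e : I ≃ Fin n), IsTypeB R n e)
    {k : I} {ϖ : R.V} (hfund : R.IsFundamental k ϖ)
    {J : Set I} (hJ : J = {i | i ≠ k}) :
    ∀ u : R.W, R.toLin u ϖ = ϖ → u ∈ R.WJ J := by
  suffices H : ∀ n : ℕ, ∀ u : R.W, R.len u = n → R.toLin u ϖ = ϖ → u ∈ R.WJ J by
    intro u hu
    exact H (R.len u) u rfl hu
  intro n
  induction n using Nat.strong_induction_on with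
  | _ n ih =>
    intro u hlen hfix
    by_cases hu : u = 1
    · rw [hu]; exact one_mem _
    · obtain ⟨i, hi⟩ := R.exists_neg_simple htype (w := u⁻¹) (by simp [hu])
      have hcor : R.coroot (R.α i) ϖ = R.coroot (R.toLin u⁻¹ (R.α i)) ϖ := by
        conv_lhs => rw [← hfix, coroot_act']
      have hle : R.coroot (R.toLin u⁻¹ (R.α i)) ϖ ≤ 0 := R.dominant_neg hfund hi
      have hik : i ≠ k := by
        intro hik
        have := hfund i
        rw [if_pos hik] at this
        rw [this] at hcor
        linarith
      have hcor0 : R.coroot (R.α i) ϖ = 0 := by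
        have := hfund i
        rwa [if_neg hik] at this
      have hiJ : i ∈ J := by rw [hJ]; exact hik
      have hs : R.toLin (R.s i) ϖ = ϖ := by
        rw [s_apply, hcor0, zero_smul, sub_zero]
      have hfix' : R.toLin (R.s i * u) ϖ = ϖ := by
        rw [← act_act, hfix, hs]
      have hlen' : R.len (R.s i * u) + 1 = R.len u := R.len_s_mul_of_neg htype hi
      have hmem := ih (R.len (R.s i * u)) (by omega) (R.s i * u) rfl hfix'
      have : u = R.s i * (R.s i * u) := by rw [← mul_assoc, R.s_sq, one_mul]
      rw [this]
      exact mul_mem (Subgroup.subset_closure ⟨i, hiJ, rfl⟩) hmem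

lemma minrep_pos (htype : R.IsSimplyLaced ∨ ∃ (n : ℕ) (e : I ≃ Fin n), IsTypeB R n e)
    {J : Set I} {w : R.W} (hw : R.IsMinRep J w) {j : I} (hj : j ∈ J) :
    R.IsPos (R.toLin w (R.α j)) := by
  by_contra hn
  have hneg : R.IsPos (-(R.toLin w (R.α j))) :=
    R.pos_dichotomy (R.root_inv _ _ (R.root_simple j)) hn
  have h1 : R.IsPos (-(R.toLin (w⁻¹)⁻¹ (R.α j))) := by rwa [inv_inv]
  have h2 := R.len_s_mul_of_neg htype h1
  rw [R.len_inv] at h2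
  have h3 : (w * R.s j)⁻¹ = R.s j * w⁻¹ := by rw [mul_inv_rev, R.s_inv]
  have h4 : R.len (w * R.s j) = R.len (R.s j * w⁻¹) := by rw [← R.len_inv, h3]
  have h5 := hw (R.s j) (Subgroup.subset_closure ⟨j, hj, rfl⟩)
  omega

/-- a minimal representative sends a positive root supported on `J` to a positive root -/
lemma minrep_pos_supp (htype : R.IsSimplyLaced ∨ ∃ (n : ℕ) (e : I ≃ Fin n), IsTypeB R n e)
    {J : Set I} {w : R.W} (hw : R.IsMinRep J w) {γ : R.V} (hr : R.isRoot γ)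
    {c : I → ℕ} (hγ : γ = ∑ i, (c i : ℚ) • R.α i) (hsupp : ∀ i, i ∉ J → c i = 0) :
    R.IsPos (R.toLin w γ) := by
  classical
  refine ⟨R.root_inv _ _ hr, ?_⟩
  set E : I → I → ℕ := fun i =>
    if h : R.IsPos (R.toLin w (R.α i)) then h.2.choose else 0 with hE
  have hEspec : ∀ i, c i ≠ 0 → R.toLin w (R.α i) = ∑ t, ((E i t : ℚ)) • R.α t := by
    intro i hci
    have hiJ : i ∈ J := by
      by_contra hiJ
      exact hci (hsupp i hiJ)
    have hp := R.minrep_pos htype hw hiJ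
    rw [hE]
    simp only [dif_pos hp]
    exact hp.2.choose_spec
  refine ⟨fun t => ∑ i, c i * E i t, ?_⟩
  have h1 : R.toLin w γ = ∑ i, (c i : ℚ) • R.toLin w (R.α i) := by
    rw [hγ, map_sum]
    congr 1; ext i
    rw [map_smul]
    try rfl
  rw [h1]
  have h2 : ∀ i ∈ Finset.univ, (c i : ℚ) • R.toLin w (R.α i)
      = ∑ t, ((c i : ℚ) * (E i t : ℚ)) • R.α t := by
    intro i _
    rcases eq_or_ne (c i) 0 with h0 | h0
    · simp [h0]
    · rw [hEspec i h0, Finset.smul_sum]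
      congr 1; ext t
      rw [smul_smul]
  rw [Finset.sum_congr rfl h2, Finset.sum_comm]
  congr 1; ext t
  rw [← Finset.sum_smul]
  congr 1
  push_cast
  try rfl

lemma sum_sub_ite (q : I → ℚ) (j : I) (A : ℚ) :
    ∑ t, (q t - if t = j then A else 0) • R.α t
      = (∑ t, q t • R.α t) - A • R.α j := by
  have h1 : ∑ t, (q t - if t = j then A else 0) • R.α t
      = (∑ t, q t • R.α t) - ∑ t, (if t = j then A else 0) • R.α t := by
    rw [← Finset.sum_sub_distrib]
    congr 1; ext t; rw [sub_smul]
  rw [h1]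
  congr 1
  simp only [ite_smul, zero_smul]
  rw [Finset.sum_ite_eq' Finset.univ j]
  simp

lemma SuppJ_act {J : Set I} {z : R.W} (hz : z ∈ R.WJ J) {x : R.V}
    (hx : ∃ q : I → ℚ, x = ∑ i, q i • R.α i ∧ ∀ i, i ∉ J → q i = 0) :
    ∃ q : I → ℚ, R.toLin z x = ∑ i, q i • R.α i ∧ ∀ i, i ∉ J → q i = 0 := by
  obtain ⟨l, hl, hp⟩ := R.mem_closure_word hz
  rw [← hp]
  clear hp hz
  induction l with
  | nil => simpa [act_one] using hx
  | cons j l ih =>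
    have hjJ : j ∈ J := hl j List.mem_cons_self
    obtain ⟨q, hq, hqs⟩ := ih (fun a ha => hl a (List.mem_cons_of_mem j ha))
    have hstep : R.toLin ((List.map R.s (j :: l)).prod) x
        = R.toLin (R.s j) (R.toLin ((List.map R.s l).prod) x) := by
      simp only [List.map_cons, List.prod_cons, ← act_act]
    set A := R.coroot (R.α j) (∑ i, q i • R.α i) with hA
    refine ⟨fun t => q t - (if t = j then A else 0), ?_, ?_⟩
    · rw [hstep, hq, s_apply, R.sum_sub_ite q j A]
    · intro t ht
      dsimp only
      rw [hqs t ht, if_neg (by rintro rfl; exact ht hjJ)]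
      simp

lemma pos_outside {J : Set I} {z : R.W} (hz : z ∈ R.WJ J) {i : I} (hi : i ∉ J) :
    R.IsPos (R.toLin z (R.α i)) := by
  obtain ⟨l, hl, hp⟩ := R.mem_closure_word hz
  rw [← hp]
  clear hp hz
  have key : ∀ x : R.V, R.isRoot x → (∃ q : I → ℚ, x = ∑ t, q t • R.α t ∧ 0 < q i) →
      R.isRoot (R.toLin ((List.map R.s l).prod) x) ∧
      (∃ q : I → ℚ, R.toLin ((List.map R.s l).prod) x = ∑ t, q t • R.α t ∧ 0 < q i) := by
    induction l with
    | nil =>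
      intro x hx hq
      simpa [act_one] using ⟨hx, hq⟩
    | cons j l ih =>
      intro x hx hq
      have hjJ : j ∈ J := hl j List.mem_cons_self
      have hji : j ≠ i := by rintro rfl; exact hi hjJ
      obtain ⟨hroot', q, hq', hqi⟩ := ih (fun a ha => hl a (List.mem_cons_of_mem j ha)) x hx hq
      have hstep : R.toLin ((List.map R.s (j :: l)).prod) x
          = R.toLin (R.s j) (R.toLin ((List.map R.s l).prod) x) := by
        simp only [List.map_cons, List.prod_cons, ← act_act]
      constructor
      · rw [hstep]; exact R.root_inv _ _ hroot'
      · set A := R.coroot (R.α j) (∑ t, q t • R.α t) with hA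
        refine ⟨fun t => q t - (if t = j then A else 0), ?_, ?_⟩
        · rw [hstep, hq', s_apply, R.sum_sub_ite q j A]
        · dsimp only
          rw [if_neg (fun h => hji h.symm), sub_zero]
          exact hqi
  have halpha : ∃ q : I → ℚ, R.α i = ∑ t, q t • R.α t ∧ 0 < q i := by
    refine ⟨fun t => if t = i then 1 else 0, ?_, by simp⟩
    simp only [ite_smul, zero_smul]
    rw [Finset.sum_ite_eq' Finset.univ i]
    simp
  obtain ⟨hroot, q, hrep, hqi⟩ := key (R.α i) (R.root_simple i) halpha
  exact R.pos_of_coeff hroot hrep hqi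

lemma minrep_unique (htype : R.IsSimplyLaced ∨ ∃ (n : ℕ) (e : I ≃ Fin n), IsTypeB R n e)
    {J : Set I} {y w : R.W} (hy : R.IsMinRep J y) (hw : R.IsMinRep J w)
    (hz : w⁻¹ * y ∈ R.WJ J) : y = w := by
  set z := w⁻¹ * y with hzdef
  have hyw : y = w * z := by rw [hzdef, ← mul_assoc, mul_inv_cancel, one_mul]
  by_contra hne
  have hz1 : z ≠ 1 := by
    intro h0
    apply hne
    rw [hyw, h0, mul_one]
  obtain ⟨i, hi⟩ := R.exists_neg_simple htype hz1
  have hiJ : i ∈ J := by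
    by_contra hiJ
    exact R.not_pos_neg (R.pos_outside hz hiJ) hi
  set γ := -(R.toLin z (R.α i)) with hγdef
  have hγroot : R.isRoot γ := R.root_neg (R.root_inv _ _ (R.root_simple i))
  obtain ⟨_, c, hc⟩ := hi
  have hsuppq : ∃ q : I → ℚ, R.toLin z (R.α i) = ∑ t, q t • R.α t ∧ ∀ t, t ∉ J → q t = 0 := by
    apply R.SuppJ_act hz
    refine ⟨fun t => if t = i then 1 else 0, ?_, ?_⟩
    · simp only [ite_smul, zero_smul]
      rw [Finset.sum_ite_eq' Finset.univ i]
      simp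
    · intro t ht
      dsimp only
      rw [if_neg (by rintro rfl; exact ht hiJ)]
  obtain ⟨q, hq, hqs⟩ := hsuppq
  have hcc : ∀ t, (c t : ℚ) = -(q t) := by
    have : ∑ t, (c t : ℚ) • R.α t = ∑ t, (-(q t)) • R.α t := by
      rw [← hc, hγdef, hq]
      rw [← Finset.sum_neg_distrib]
      congr 1; ext t; rw [neg_smul]
    exact R.coeff_eq this
  have hcsupp : ∀ t, t ∉ J → c t = 0 := by
    intro t ht
    have := hcc t
    rw [hqs t ht, neg_zero] at this
    exact_mod_cast this
  have hposw : R.IsPos (R.toLin w γ) := R.minrep_pos_supp htype hw hγroot hc hcsupp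
  have hyi : R.toLin y (R.α i) = -(R.toLin w γ) := by
    rw [hyw, ← act_act, hγdef, map_neg, neg_neg]
  have : R.IsPos (-(R.toLin y (R.α i))) := by rw [hyi, neg_neg]; exact hposw
  exact R.not_pos_neg (R.minrep_pos htype hy hiJ) this

lemma minrep_s_descend {J : Set I} {w : R.W} {i : I} (hw : R.IsMinRep J w)
    (hlen : R.len (R.s i * w) + 1 = R.len w) : R.IsMinRep J (R.s i * w) := by
  intro z hz
  have h1 : R.len (R.s i * w * z) = R.len (R.s i * (w * z)) := by rw [mul_assoc]
  have h2 := R.len_le_s_mul i (w * z)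
  have h3 := hw z hz
  omega

end MinRep

end RootSystemData
namespace RootSystemData

variable {I : Type} [Fintype I] [DecidableEq I] (R : RootSystemData I)

section Orbit

lemma mem_posFinset {β : R.V} : β ∈ R.posFinset ↔ R.IsPos β := by
  unfold posFinset
  rw [Set.Finite.mem_toFinset]
  rfl

lemma sum_ind (i : I) :
    ∑ t, (((if t = i then 1 else 0 : ℕ)) : ℚ) • R.α t = R.α i := by
  simp only [apply_ite (fun (m : ℕ) => (m : ℚ)), Nat.cast_one, Nat.cast_zero, ite_smul,
    zero_smul, one_smul, Finset.sum_ite_eq', Finset.mem_univ, if_true]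

lemma coroot_rho (htype : R.IsSimplyLaced ∨ ∃ (n : ℕ) (e : I ≃ Fin n), IsTypeB R n e)
    (i : I) : R.coroot (R.α i) R.ρ = 1 := by
  classical
  have hαP : R.α i ∈ R.posFinset := R.mem_posFinset.mpr (R.pos_simple i)
  have hperm : ∑ β ∈ R.posFinset.erase (R.α i), R.toLin (R.s i) β
      = ∑ β ∈ R.posFinset.erase (R.α i), β := by
    apply Finset.sum_nbij' (i := fun β => R.toLin (R.s i) β) (j := fun β => R.toLin (R.s i) β)
    · intro β hβ
      rw [Finset.mem_erase] at hβ ⊢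
      obtain ⟨hne, hP⟩ := hβ
      rw [R.mem_posFinset] at hP ⊢
      have hpos := R.pos_s_apply htype hP hne
      refine ⟨?_, hpos⟩
      intro h0
      have : β = R.toLin (R.s i) (R.α i) := by
        rw [← h0, act_act, R.s_sq, act_one]
      rw [s_apply_self] at this
      rw [this] at hP
      exact R.not_pos_neg (R.pos_simple i) hP
    · intro β hβ
      rw [Finset.mem_erase] at hβ ⊢
      obtain ⟨hne, hP⟩ := hβ
      rw [R.mem_posFinset] at hP ⊢
      have hpos := R.pos_s_apply htype hP hne
      refine ⟨?_, hpos⟩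
      intro h0
      have : β = R.toLin (R.s i) (R.α i) := by
        rw [← h0, act_act, R.s_sq, act_one]
      rw [s_apply_self] at this
      rw [this] at hP
      exact R.not_pos_neg (R.pos_simple i) hP
    · intro β _
      rw [act_act, R.s_sq, act_one]
    · intro β _
      rw [act_act, R.s_sq, act_one]
    · intro β _
      rfl
  have hS : R.toLin (R.s i) (∑ β ∈ R.posFinset, β)
      = (∑ β ∈ R.posFinset, β) - (2:ℚ) • R.α i := by
    conv_lhs => rw [← Finset.sum_erase_add _ _ hαP]
    rw [map_add, map_sum, hperm, s_apply_self]
    conv_rhs => rw [← Finset.sum_erase_add _ _ hαP]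
    have h2 : (2:ℚ) • R.α i = R.α i + R.α i := by rw [two_smul]
    rw [h2]
    abel
  have hρ : R.toLin (R.s i) R.ρ = R.ρ - R.α i := by
    unfold ρ
    rw [map_smul, hS, smul_sub, smul_smul]
    norm_num
  rw [s_apply] at hρ
  have h4 : R.coroot (R.α i) R.ρ • R.α i = R.α i := sub_right_injective hρ
  have h5 : (R.coroot (R.α i) R.ρ - 1) • R.α i = 0 := by
    rw [sub_smul, one_smul, h4, sub_self]
  rcases smul_eq_zero.mp h5 with h | h
  · linarith [sub_eq_zero.mp (sub_eq_zero.mpr (by linarith : R.coroot (R.α i) R.ρ = 1))]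
  · exact absurd h (R.alpha_ne_zero i)

lemma B_rho_alpha_pos (htype : R.IsSimplyLaced ∨ ∃ (n : ℕ) (e : I ≃ Fin n), IsTypeB R n e)
    (i : I) : 0 < R.B R.ρ (R.α i) := by
  have h := R.coroot_rho htype i
  unfold coroot at h
  have hd := R.d_pos i
  rw [R.B_symm]
  by_contra hc
  push_neg at hc
  have : 2 * R.B (R.α i) R.ρ / R.B (R.α i) (R.α i) ≤ 0 := by
    apply div_nonpos_of_nonpos_of_nonneg <;> linarith
  linarith

lemma claimA (htype : R.IsSimplyLaced ∨ ∃ (n : ℕ) (e : I ≃ Fin n), IsTypeB R n e)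
    {k : I} {ϖ : R.V} (hfund : R.IsFundamental k ϖ) (hmin : R.IsMinuscule ϖ)
    {ζ : R.V} (hζ : ∃ z : R.W, R.toLin z ϖ = ζ) (hne : ζ ≠ ϖ) :
    ∃ i, R.coroot (R.α i) ζ = -1 := by
  classical
  set T := {n : ℕ | ∃ z : R.W, R.len z = n ∧ R.toLin z ϖ = ζ} with hT
  have hTne : T.Nonempty := by
    obtain ⟨z, hz⟩ := hζ
    exact ⟨R.len z, z, rfl, hz⟩
  obtain ⟨z₀, hz₀len, hz₀fix⟩ := Nat.sInf_mem hTne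
  have hz₀1 : z₀ ≠ 1 := by
    rintro rfl
    rw [act_one] at hz₀fix
    exact hne hz₀fix.symm
  obtain ⟨i, hi⟩ := R.exists_neg_simple htype (w := z₀⁻¹) (by simp [hz₀1])
  have hcor : R.coroot (R.α i) ζ = R.coroot (R.toLin z₀⁻¹ (R.α i)) ϖ := by
    rw [← hz₀fix, coroot_act']
  have hle : R.coroot (R.α i) ζ ≤ 0 := by
    rw [hcor]
    exact R.dominant_neg hfund hi
  have hmem : R.coroot (R.α i) ζ ∈ ({-1, 0, 1} : Set ℚ) := by
    rw [hcor]
    exact hmin _ (R.root_inv _ _ (R.root_simple i))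
  have hne0 : R.coroot (R.α i) ζ ≠ 0 := by
    intro h0
    have hfix' : R.toLin (R.s i * z₀) ϖ = ζ := by
      rw [← act_act, hz₀fix, s_apply, h0, zero_smul, sub_zero]
    have hlen' : R.len (R.s i * z₀) + 1 = R.len z₀ := R.len_s_mul_of_neg htype hi
    have : R.len (R.s i * z₀) ∈ T := ⟨R.s i * z₀, rfl, hfix'⟩
    have := Nat.sInf_le this
    omega
  refine ⟨i, ?_⟩
  rcases hmem with h | h | h
  · exact h
  · exact absurd h hne0
  · exfalso; rw [h] at hle; linarith

lemma orbit_finite (htype : R.IsSimplyLaced ∨ ∃ (n : ℕ) (e : I ≃ Fin n), IsTypeB R n e)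
    (ϖ : R.V) : {v : R.V | ∃ z : R.W, R.toLin z ϖ = v}.Finite := by
  have : Finite R.W := R.W_finite htype
  have : {v : R.V | ∃ z : R.W, R.toLin z ϖ = v} = Set.range (fun z : R.W => R.toLin z ϖ) := by
    ext v; simp [eq_comm]
  rw [this]
  exact Set.finite_range _

lemma highest_weight (htype : R.IsSimplyLaced ∨ ∃ (n : ℕ) (e : I ≃ Fin n), IsTypeB R n e)
    {k : I} {ϖ : R.V} (hfund : R.IsFundamental k ϖ) (hmin : R.IsMinuscule ϖ) :
    ∀ ζ : R.V, (∃ z : R.W, R.toLin z ϖ = ζ) → ζ ≠ ϖ →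
    ∃ c : I → ℕ, ϖ - ζ = ∑ i, (c i : ℚ) • R.α i ∧ 1 ≤ c k := by
  classical
  set orb := {v : R.V | ∃ z : R.W, R.toLin z ϖ = v} with horb
  have horbfin : orb.Finite := R.orbit_finite htype ϖ
  set m : R.V → ℕ := fun ζ => {ξ ∈ orb | R.B R.ρ ζ < R.B R.ρ ξ}.ncard with hm
  suffices H : ∀ n : ℕ, ∀ ζ : R.V, ζ ∈ orb → ζ ≠ ϖ → m ζ = n →
      ∃ c : I → ℕ, ϖ - ζ = ∑ i, (c i : ℚ) • R.α i ∧ 1 ≤ c k by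
    intro ζ hζ hne
    exact H (m ζ) ζ hζ hne rfl
  intro n
  induction n using Nat.strong_induction_on with
  | _ n ih =>
    intro ζ hζ hne hmn
    obtain ⟨i, hi⟩ := R.claimA htype hfund hmin hζ hne
    set ζ' := ζ + R.α i with hζ'
    have hζ'orb : ζ' ∈ orb := by
      obtain ⟨z, hz⟩ := hζ
      refine ⟨R.s i * z, ?_⟩
      rw [← act_act, hz, s_apply, hi, hζ']
      rw [neg_smul, one_smul, sub_neg_eq_add]
    have hBlt : R.B R.ρ ζ < R.B R.ρ ζ' := by
      rw [hζ', map_add]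
      have := R.B_rho_alpha_pos htype i
      linarith
    by_cases hζ'ϖ : ζ' = ϖ
    · have hik : i = k := by
        have h1 : R.coroot (R.α i) ζ = R.coroot (R.α i) ϖ - 2 := by
          have : ζ = ϖ - R.α i := by rw [← hζ'ϖ, hζ']; abel
          rw [this]
          unfold coroot
          rw [map_sub]
          have hd := (R.d_pos i).ne'
          field_simp
        have h2 := hfund i
        by_contra hik
        rw [if_neg hik] at h2
        rw [h2] at h1
        rw [hi] at h1
        linarith
      refine ⟨fun t => if t = k then 1 else 0, ?_, by simp⟩
      rw [R.sum_ind k, ← hik]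
      rw [← hζ'ϖ, hζ']
      abel
    · have hsub : {ξ ∈ orb | R.B R.ρ ζ' < R.B R.ρ ξ} ⊂ {ξ ∈ orb | R.B R.ρ ζ < R.B R.ρ ξ} := by
        constructor
        · intro ξ hξ
          exact ⟨hξ.1, by linarith [hξ.2]⟩
        · intro hcon
          have hζ'mem : ζ' ∈ {ξ ∈ orb | R.B R.ρ ζ < R.B R.ρ ξ} := ⟨hζ'orb, hBlt⟩
          have := hcon hζ'mem
          simp only [Set.mem_setOf_eq] at this
          linarith [this.2]
      have hfin : {ξ ∈ orb | R.B R.ρ ζ < R.B R.ρ ξ}.Finite :=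
        horbfin.subset (fun ξ hξ => hξ.1)
      have hlt : m ζ' < m ζ := Set.ncard_lt_ncard hsub hfin
      obtain ⟨c', hc', hck⟩ := ih (m ζ') (by omega) ζ' hζ'orb hζ'ϖ rfl
      refine ⟨fun t => c' t + (if t = i then 1 else 0), ?_, ?_⟩
      · have : ∑ t, ((c' t + if t = i then 1 else 0 : ℕ) : ℚ) • R.α t
            = (∑ t, (c' t : ℚ) • R.α t) + ∑ t, (((if t = i then 1 else 0 : ℕ)) : ℚ) • R.α t := by
          rw [← Finset.sum_add_distrib]
          congr 1; ext t
          push_cast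
          rw [add_smul]
        rw [this, R.sum_ind i, ← hc', hζ']
        abel
      · dsimp only
        exact Nat.le_trans hck (Nat.le_add_right _ _)
  
end Orbit

end RootSystemData
namespace RootSystemData

variable {I : Type} [Fintype I] [DecidableEq I] (R : RootSystemData I)

section Main

lemma sum_ind_q (i : I) :
    ∑ t, (if t = i then (1:ℚ) else 0) • R.α t = R.α i := by
  simp only [ite_smul, zero_smul, one_smul, Finset.sum_ite_eq', Finset.mem_univ, if_true]

lemma bruhat_diff_NN (htype : R.IsSimplyLaced ∨ ∃ (n : ℕ) (e : I ≃ Fin n), IsTypeB R n e)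
    {k : I} {ϖ : R.V} (hfund : R.IsFundamental k ϖ) (hmin : R.IsMinuscule ϖ)
    {y w : R.W} (hbr : R.bruhatLE y w) :
    R.NN (R.toLin y ϖ - R.toLin w ϖ) := by
  induction hbr with
  | refl => simpa using R.NN_zero
  | @tail b c hab hbc ih =>
    obtain ⟨⟨β, hβ, hc⟩, hlen⟩ := hbc
    rw [hc] at hlen
    have hpos' : R.IsPos (R.toLin b⁻¹ β) := R.pos_inv_of_len_lt htype hβ hlen
    have hcw : R.toLin c ϖ = R.toLin b ϖ - R.coroot β (R.toLin b ϖ) • β := by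
      rw [hc, ← act_act, R.refl_apply hβ.1]
    have hcor : R.coroot β (R.toLin b ϖ) = R.coroot (R.toLin b⁻¹ β) ϖ := coroot_act' R b β ϖ
    have hnn : R.NN (R.coroot β (R.toLin b ϖ) • β) := by
      have hge : 0 ≤ R.coroot β (R.toLin b ϖ) := by
        rw [hcor]; exact R.dominant_pos hfund hpos'
      have hval := hmin _ hpos'.1
      rw [← hcor] at hval
      rcases hval with h | h | h
      · rw [h] at hge; norm_num at hge
      · rw [h, zero_smul]; exact R.NN_zero
      · rw [h, one_smul]; exact hβ.2
    have : R.toLin y ϖ - R.toLin c ϖ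
        = (R.toLin y ϖ - R.toLin b ϖ) + R.coroot β (R.toLin b ϖ) • β := by
      rw [hcw]; abel
    rw [this]
    exact R.NN_add ih hnn

lemma main_aux (htype : R.IsSimplyLaced ∨ ∃ (n : ℕ) (e : I ≃ Fin n), IsTypeB R n e)
    {k : I} {ϖ : R.V} (hfund : R.IsFundamental k ϖ) (hmin : R.IsMinuscule ϖ)
    {J : Set I} (hJ : J = {i | i ≠ k}) {y : R.W} (hy : R.IsMinRep J y) :
    ∀ N : ℕ, ∀ w : R.W, R.IsMinRep J w → ∀ c : I → ℕ, (∑ i, c i) = N →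
    R.toLin y ϖ - R.toLin w ϖ = ∑ i, (c i : ℚ) • R.α i →
    ∃ (p : ℕ) (ys : ℕ → R.W) (js : ℕ → I),
      ys 0 = y ∧ ys p = w ∧
      ∀ q < p, R.IsMinRep J (ys (q + 1)) ∧
        ys (q + 1) = R.s (js (q + 1)) * ys q ∧
        R.len (ys (q + 1)) = R.len (ys q) + 1 := by
  intro N
  induction N with
  | zero =>
    intro w hw c hsum hdiff
    have hc0 : ∀ i ∈ Finset.univ, c i = 0 := Finset.sum_eq_zero_iff.mp hsum
    have hdiff0 : R.toLin y ϖ = R.toLin w ϖ := by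
      have : R.toLin y ϖ - R.toLin w ϖ = 0 := by
        rw [hdiff]
        apply Finset.sum_eq_zero
        intro i _
        rw [hc0 i (Finset.mem_univ i)]
        simp
      exact sub_eq_zero.mp this
    have hfix : R.toLin (w⁻¹ * y) ϖ = ϖ := by
      rw [← act_act, hdiff0, act_inv_act]
    have hmem := R.stab_mem_WJ htype hfund hJ (w⁻¹ * y) hfix
    have hyw : y = w := R.minrep_unique htype hy hw hmem
    refine ⟨0, fun _ => y, fun _ => k, rfl, hyw, ?_⟩
    intro q hq
    exact absurd hq (Nat.not_lt_zero q)
  | succ N ihN =>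
    intro w hw c hsum hdiff
    set μ := R.toLin y ϖ with hμ
    set ν := R.toLin w ϖ with hν
    set ζ := R.toLin (y⁻¹ * w) ϖ with hζ
    have hδ0 : μ - ν ≠ 0 := by
      intro h0
      rw [h0] at hdiff
      have hz : ∀ i, c i = 0 := by
        intro i
        have h := R.coeff_zero (f := fun i => (c i : ℚ)) hdiff.symm i
        simpa using h
      rw [Finset.sum_congr rfl (fun i _ => hz i)] at hsum
      simp at hsum
    have hBμμ : R.B μ μ = R.B ϖ ϖ := by rw [hμ, R.B_inv]
    have hBνν : R.B ν ν = R.B ϖ ϖ := by rw [hν, R.B_inv]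
    have hμν : R.B μ ν = R.B ϖ ζ := by
      have h1 : R.B (R.toLin y⁻¹ μ) (R.toLin y⁻¹ ν) = R.B μ ν := R.B_inv y⁻¹ μ ν
      rw [← h1, hμ, hν, act_inv_act, act_act]
    have hζne : ζ ≠ ϖ := by
      intro h0
      apply hδ0
      have : R.toLin y ζ = R.toLin y ϖ := by rw [h0]
      rw [hζ, act_act, ← mul_assoc, mul_inv_cancel, one_mul] at this
      rw [hμ, hν, ← this]
      simp
    obtain ⟨c', hc', hck⟩ := R.highest_weight htype hfund hmin ζ ⟨y⁻¹ * w, rfl⟩ hζne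
    have hBgap : 0 < R.B ϖ ϖ - R.B μ ν := by
      rw [hμν]
      have h1 : R.B ϖ (ϖ - ζ) = ∑ t, (c' t : ℚ) * R.B ϖ (R.α t) := by
        rw [hc', map_sum]
        congr 1; ext t
        rw [map_smul]
        rfl
      have h2 : ∀ t, R.B ϖ (R.α t) = if t = k then R.B (R.α t) (R.α t) / 2 else 0 := by
        intro t
        rw [R.B_symm, R.B_alpha_fund hfund]
      have h3 : R.B ϖ (ϖ - ζ) = (c' k : ℚ) * (R.B (R.α k) (R.α k) / 2) := by
        rw [h1, Finset.sum_eq_single k]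
        · rw [h2 k, if_pos rfl]
        · intro t _ ht
          rw [h2 t, if_neg ht, mul_zero]
        · intro h
          exact absurd (Finset.mem_univ k) h
      have h4 : R.B ϖ (ϖ - ζ) = R.B ϖ ϖ - R.B ϖ ζ := by
        rw [map_sub]
      have hdk := R.d_pos k
      have hck' : (1:ℚ) ≤ (c' k : ℚ) := by exact_mod_cast hck
      nlinarith
    have esub : R.B (μ - ν) = R.B μ - R.B ν := map_sub R.B μ ν
    have hBδδ : R.B (μ - ν) (μ - ν) = 2 * (R.B ϖ ϖ - R.B μ ν) := by
      rw [esub, LinearMap.sub_apply,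
        show R.B μ (μ - ν) = R.B μ μ - R.B μ ν from map_sub _ _ _,
        show R.B ν (μ - ν) = R.B ν μ - R.B ν ν from map_sub _ _ _,
        hBμμ, hBνν, R.B_symm ν μ]
      ring
    have hex : ∃ i, c i ≠ 0 ∧ R.B (R.α i) ν < 0 := by
      by_contra hcon
      push_neg at hcon
      have h1 : 0 ≤ R.B (μ - ν) ν := by
        rw [hdiff, B_sum_apply]
        apply Finset.sum_nonneg
        intro t _
        rcases eq_or_ne (c t) 0 with h0 | h0
        · rw [h0]; simp
        · have hc1 := hcon t h0
          have hc2 : (0:ℚ) ≤ (c t : ℚ) := Nat.cast_nonneg _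
          exact mul_nonneg hc2 hc1
      have h2 : R.B (μ - ν) (μ + ν) = 0 := by
        rw [esub, LinearMap.sub_apply,
          show R.B μ (μ + ν) = R.B μ μ + R.B μ ν from map_add _ _ _,
          show R.B ν (μ + ν) = R.B ν μ + R.B ν ν from map_add _ _ _,
          hBμμ, hBνν, R.B_symm ν μ]
        ring
      have h3 : R.B (μ - ν) (μ - ν) = R.B (μ - ν) (μ + ν) - 2 * R.B (μ - ν) ν := by
        rw [show R.B (μ - ν) (μ - ν) = R.B (μ - ν) μ - R.B (μ - ν) ν from map_sub _ _ _,
          show R.B (μ - ν) (μ + ν) = R.B (μ - ν) μ + R.B (μ - ν) ν from map_add _ _ _]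
        ring
      rw [h2] at h3
      linarith [hBgap, hBδδ, h1, h3]
    obtain ⟨i, hci, hBneg⟩ := hex
    have hcor : R.coroot (R.α i) ν < 0 := by
      unfold coroot
      apply div_neg_of_neg_of_pos
      · linarith
      · exact R.d_pos i
    have hcorm : R.coroot (R.α i) ν = R.coroot (R.toLin w⁻¹ (R.α i)) ϖ := by
      rw [hν, coroot_act']
    have hroot' : R.isRoot (R.toLin w⁻¹ (R.α i)) := R.root_inv _ _ (R.root_simple i)
    have hNeg : R.IsPos (-(R.toLin w⁻¹ (R.α i))) := by
      apply R.pos_dichotomy hroot'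
      intro hp
      have := R.dominant_pos hfund hp
      rw [← hcorm] at this
      linarith
    have hval : R.coroot (R.α i) ν = -1 := by
      have hmem := hmin _ hroot'
      rw [← hcorm] at hmem
      rcases hmem with h | h | h
      · exact h
      · rw [h] at hcor; linarith
      · rw [h] at hcor; linarith
    have hlen : R.len (R.s i * w) + 1 = R.len w := R.len_s_mul_of_neg htype hNeg
    have hw' : R.IsMinRep J (R.s i * w) := R.minrep_s_descend hw hlen
    have hν' : R.toLin (R.s i * w) ϖ = ν + R.α i := by
      rw [← act_act, ← hν, s_apply, hval, neg_smul, one_smul, sub_neg_eq_add]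
    have hci1 : 1 ≤ c i := Nat.one_le_iff_ne_zero.mpr hci
    set c'' : I → ℕ := fun t => c t - (if t = i then 1 else 0) with hc''
    have hcrel : ∀ t, c'' t + (if t = i then 1 else 0) = c t := by
      intro t
      simp only [hc'']
      rcases eq_or_ne t i with h | h
      · subst h
        rw [if_pos rfl]
        omega
      · rw [if_neg h]
        omega
    have hsum'' : ∑ t, c'' t = N := by
      have h1 : ∑ t, c t = (∑ t, c'' t) + ∑ t, (if t = i then 1 else 0) := by
        rw [← Finset.sum_add_distrib]
        exact (Finset.sum_congr rfl (fun t _ => (hcrel t).symm))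
      have h2 : ∑ t, (if t = i then 1 else 0) = 1 := by
        rw [Finset.sum_ite_eq' Finset.univ i (fun _ => 1)]
        simp
      rw [hsum, h2] at h1
      omega
    have hdiff'' : R.toLin y ϖ - R.toLin (R.s i * w) ϖ = ∑ t, (c'' t : ℚ) • R.α t := by
      rw [hν', ← hμ]
      have h1 : ∀ t, (c'' t : ℚ) = (c t : ℚ) - (if t = i then (1:ℚ) else 0) := by
        intro t
        simp only [hc'']
        rcases eq_or_ne t i with h | h
        · subst h
          rw [if_pos rfl, if_pos rfl, Nat.cast_sub hci1]
          simp
        · rw [if_neg h, if_neg h]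
          simp
      have h2 : ∑ t, (c'' t : ℚ) • R.α t
          = (∑ t, (c t : ℚ) • R.α t) - ∑ t, (if t = i then (1:ℚ) else 0) • R.α t := by
        rw [← Finset.sum_sub_distrib]
        congr 1; ext t
        rw [h1 t, sub_smul]
      rw [h2, R.sum_ind_q i, ← hdiff]
      abel
    obtain ⟨p, ys, js, hys0, hysp, hchain⟩ := ihN (R.s i * w) hw' c'' hsum'' hdiff''
    refine ⟨p + 1, Function.update ys (p + 1) w, Function.update js (p + 1) i, ?_, ?_, ?_⟩
    · rw [Function.update_of_ne (by omega : (0:ℕ) ≠ p + 1)]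
      exact hys0
    · rw [Function.update_self]
    · intro q hq
      rcases Nat.lt_or_ge q p with hqp | hqp
      · simp only [Function.update_of_ne (by omega : q + 1 ≠ p + 1),
          Function.update_of_ne (by omega : q ≠ p + 1)]
        exact hchain q hqp
      · have hqe : q = p := by omega
        subst hqe
        simp only [Function.update_self, Function.update_of_ne (by omega : q ≠ q + 1)]
        refine ⟨hw, ?_, ?_⟩
        · rw [hysp, ← mul_assoc, R.s_sq, one_mul]
        · rw [hysp]
          omega

end Main

end RootSystemData
/-- With `ϖ_k` minuscule, the Bruhat order on `W^J` agrees with the left weak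
order on `W^J`. -/
theorem stmt9 {I : Type} [Fintype I] [DecidableEq I] (R : RootSystemData I)
    (hirr : R.IsIrreducible)
    (htype : R.IsSimplyLaced ∨ ∃ (n : ℕ) (e : I ≃ Fin n), IsTypeB R n e)
    (k : I) (ϖ : R.V) (hfund : R.IsFundamental k ϖ) (hmin : R.IsMinuscule ϖ)
    (J : Set I) (hJ : J = {i | i ≠ k})
    (y w : R.W) (hy : R.IsMinRep J y) (hw : R.IsMinRep J w)
    (hbr : R.bruhatLE y w) :
    ∃ (p : ℕ) (ys : ℕ → R.W) (js : ℕ → I),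
      ys 0 = y ∧ ys p = w ∧
      ∀ q < p, R.IsMinRep J (ys (q + 1)) ∧
        ys (q + 1) = R.s (js (q + 1)) * ys q ∧
        R.len (ys (q + 1)) = R.len (ys q) + 1 := by
  obtain ⟨c, hc⟩ := R.bruhat_diff_NN htype hfund hmin hbr
  exact R.main_aux htype hfund hmin hJ hy (∑ i, c i) w hw c rfl hc
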